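/- Let X be a locally connected space and I ⊆ X a closed subset. Then I is negligible in X if and only if for each x ∈ I there is a neighborhood basis 𝒱ₓ at x such that for each V ∈ 𝒱ₓ, both V and V − I are connected and non-empty. -/
import Mathlib


open Set Topology

/-- An open subset `U` is Z-dense if it meets every non-empty open connected set
in a non-empty connected set. -/
def IsZDense {X : Type*} [TopologicalSpace X] (U : Set X) : Prop :=
  IsOpen U ∧ ∀ C : Set X, IsOpen C → IsConnected C → IsConnected (U ∩ C)

/-- A subset is negligible if its complement is Z-dense. -/
def IsNegligible {X : Type*} [TopologicalSpace X] (I : Set X) : Prop :=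
  IsZDense Iᶜ

private lemma aux_open {X : Type*} [TopologicalSpace X] {I C W : Set X} (hW : IsOpen W) :
    IsOpen (W ∪ {x | (x ∈ C ∧ x ∈ I) ∧ ∃ V ∈ 𝓝 x, V ⊆ C ∧ V \ I ⊆ W}) := by
  rw [isOpen_iff_mem_nhds]
  rintro x (hxW | ⟨⟨hxC, hxI⟩, V, hV, hVC, hVA⟩)
  · exact Filter.mem_of_superset (hW.mem_nhds hxW) subset_union_left
  · refine Filter.mem_of_superset (interior_mem_nhds.mpr hV) ?_
    intro y hy
    by_cases hyI : y ∈ I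
    · exact Or.inr ⟨⟨hVC (interior_subset hy), hyI⟩, interior V,
        isOpen_interior.mem_nhds hy, interior_subset.trans hVC,
        fun z hz => hVA ⟨interior_subset hz.1, hz.2⟩⟩
    · exact Or.inl (hVA ⟨interior_subset hy, hyI⟩)

/-- A closed subset `I` of a locally connected space is negligible iff each
`x ∈ I` has a neighborhood basis of sets `V` with both `V` and `V − I`
connected and non-empty. -/
theorem isNegligible_iff_nhds_basis {X : Type*} [TopologicalSpace X]
    [LocallyConnectedSpace X] {I : Set X} (hIc : IsClosed I) :
    IsNegligible I ↔
      ∀ x ∈ I, ∃ 𝒱 : Set (Set X),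
        (∀ V ∈ 𝒱, V ∈ 𝓝 x ∧ IsConnected V ∧ IsConnected (V \ I)) ∧
        (∀ N ∈ 𝓝 x, ∃ V ∈ 𝒱, V ⊆ N) := by
  constructor
  · rintro ⟨hopen, hZ⟩ x hx
    refine ⟨{V | IsOpen V ∧ x ∈ V ∧ IsConnected V}, ?_, ?_⟩
    · rintro V ⟨hVo, hxV, hVc⟩
      refine ⟨hVo.mem_nhds hxV, hVc, ?_⟩
      have h := hZ V hVo hVc
      rwa [diff_eq, inter_comm]
    · intro N hN
      obtain ⟨V, hVN, hVo, hxV, hVc⟩ :=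
        locallyConnectedSpace_iff_subsets_isOpen_isConnected.mp ‹LocallyConnectedSpace X› x N hN
      exact ⟨V, ⟨hVo, hxV, hVc⟩, hVN⟩
  · intro h
    refine ⟨hIc.isOpen_compl, ?_⟩
    intro C hCo hCc
    have hDsub : Iᶜ ∩ C ⊆ C := inter_subset_right
    have hne : (Iᶜ ∩ C).Nonempty := by
      obtain ⟨x, hxC⟩ := hCc.nonempty
      by_cases hxI : x ∈ I
      · obtain ⟨𝒱, h1, h2⟩ := h x hxI
        obtain ⟨V, hV𝒱, hVC⟩ := h2 C (hCo.mem_nhds hxC)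
        obtain ⟨y, hyV, hyI⟩ := (h1 V hV𝒱).2.2.nonempty
        exact ⟨y, hyI, hVC hyV⟩
      · exact ⟨x, hxI, hxC⟩
    refine ⟨hne, ?_⟩
    intro u v hu hv hcov hau hav
    by_contra hdis
    rw [Set.not_nonempty_iff_eq_empty] at hdis
    set D := Iᶜ ∩ C with hD
    set A := D ∩ u with hA
    set B := D ∩ v with hB
    have hABempty : A ∩ B = ∅ := by
      apply subset_empty_iff.mp
      rw [← hdis]
      rintro y ⟨⟨hyD, hyu⟩, _, hyv⟩
      exact ⟨hyD, hyu, hyv⟩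
    set A' := A ∪ {x | (x ∈ C ∧ x ∈ I) ∧ ∃ V ∈ 𝓝 x, V ⊆ C ∧ V \ I ⊆ A} with hA'
    set B' := B ∪ {x | (x ∈ C ∧ x ∈ I) ∧ ∃ V ∈ 𝓝 x, V ⊆ C ∧ V \ I ⊆ B} with hB'
    have hAD : A ⊆ D := inter_subset_left
    have hBD : B ⊆ D := inter_subset_left
    have hDo : IsOpen D := hIc.isOpen_compl.inter hCo
    have hA'o : IsOpen A' := aux_open (hDo.inter hu)
    have hB'o : IsOpen B' := aux_open (hDo.inter hv)
    -- disjointness of A' and B'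
    have hdisj : ∀ x, x ∈ A' → x ∈ B' → False := by
      rintro x (hxA | ⟨⟨hxC, hxI⟩, V, hV, hVC, hVA⟩) hxB
      · rcases hxB with hxB | ⟨⟨_, hxI⟩, _⟩
        · exact absurd (mem_inter hxA hxB) (by rw [hABempty]; exact notMem_empty x)
        · exact (hAD hxA).1 hxI
      · rcases hxB with hxB | ⟨⟨_, hxI'⟩, W, hW, hWC, hWB⟩
        · exact (hBD hxB).1 hxI
        · obtain ⟨𝒱, h1, h2⟩ := h x hxI
          obtain ⟨U, hU𝒱, hUVW⟩ := h2 (V ∩ W) (Filter.inter_mem hV hW)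
          obtain ⟨y, hyU, hyI⟩ := (h1 U hU𝒱).2.2.nonempty
          have hyA : y ∈ A := hVA ⟨(hUVW hyU).1, hyI⟩
          have hyB : y ∈ B := hWB ⟨(hUVW hyU).2, hyI⟩
          exact absurd (mem_inter hyA hyB) (by rw [hABempty]; exact notMem_empty y)
    -- cover
    have hcovC : C ⊆ A' ∪ B' := by
      intro x hxC
      by_cases hxI : x ∈ I
      · obtain ⟨𝒱, h1, h2⟩ := h x hxI
        obtain ⟨V, hV𝒱, hVC⟩ := h2 C (hCo.mem_nhds hxC)
        obtain ⟨hVnhds, _, hVIc⟩ := h1 V hV𝒱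
        have hVID : V \ I ⊆ D := fun z hz => ⟨hz.2, hVC hz.1⟩
        have hsub : V \ I ⊆ u ∪ v := hVID.trans hcov
        have hemp : V \ I ∩ (u ∩ v) = ∅ := by
          apply subset_empty_iff.mp
          rw [← hdis]
          rintro y ⟨hy, hyu, hyv⟩
          exact ⟨hVID hy, hyu, hyv⟩
        rcases (isPreconnected_iff_subset_of_disjoint.mp hVIc.isPreconnected)
            u v hu hv hsub hemp with hVu | hVv
        · exact Or.inl (Or.inr ⟨⟨hxC, hxI⟩, V, hVnhds, hVC,
            fun z hz => ⟨hVID hz, hVu hz⟩⟩)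
        · exact Or.inr (Or.inr ⟨⟨hxC, hxI⟩, V, hVnhds, hVC,
            fun z hz => ⟨hVID hz, hVv hz⟩⟩)
      · have hxD : x ∈ D := ⟨hxI, hxC⟩
        rcases hcov hxD with hxu | hxv
        · exact Or.inl (Or.inl ⟨hxD, hxu⟩)
        · exact Or.inr (Or.inl ⟨hxD, hxv⟩)
    have hCA : (C ∩ A').Nonempty := by
      obtain ⟨y, hy⟩ := hau
      exact ⟨y, hDsub (hAD hy), Or.inl hy⟩
    have hCB : (C ∩ B').Nonempty := by
      obtain ⟨y, hy⟩ := hav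
      exact ⟨y, hDsub (hBD hy), Or.inl hy⟩
    obtain ⟨y, _, hyA', hyB'⟩ := hCc.isPreconnected A' B' hA'o hB'o hcovC hCA hCB
    exact hdisj y hyA' hyB'
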